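/- arXiv:0811.2650 — 4 statements merged into one kernel-verified Lean document; each statement's English description precedes it below -/
import Mathlib

section
/- If every injective right R-module has finite flat dimension, then every Gorenstein projective left R-module is Gorenstein flat; consequently Gfd_R(M) ≤ Gpd_R(M) for every left R-module M. -/
open CategoryTheory

universe u

variable (R : Type u) [CommRing R]

/-- A (doubly infinite) complex of `R`-modules, as a `ℤ`-indexed family of modules
with differentials of degree `+1`. -/
structure ModuleComplex where
  X : ℤ → Type u
  [acg : ∀ n, AddCommGroup (X n)]
  [mod : ∀ n, Module R (X n)]
  d : ∀ n : ℤ, X n →ₗ[R] X (n + 1)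
  comp_eq_zero : ∀ n : ℤ, (d (n + 1)).comp (d n) = 0

attribute [instance] ModuleComplex.acg ModuleComplex.mod

namespace ModuleComplex

variable {R}

/-- The complex is exact. -/
def Exact (C : ModuleComplex R) : Prop :=
  ∀ n : ℤ, LinearMap.range (C.d n) = LinearMap.ker (C.d (n + 1))

/-- The complex `I ⊗_R C` is exact. -/
def TensorExact (C : ModuleComplex R) (I : Type u) [AddCommGroup I] [Module R I] : Prop :=
  ∀ n : ℤ, LinearMap.range (LinearMap.lTensor I (C.d n))
    = LinearMap.ker (LinearMap.lTensor I (C.d (n + 1)))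

/-- The complex `Hom_R(C, Q)` is exact. -/
def HomExact (C : ModuleComplex R) (Q : Type u) [AddCommGroup Q] [Module R Q] : Prop :=
  ∀ (n : ℤ) (f : C.X (n + 1) →ₗ[R] Q), f.comp (C.d n) = 0 →
    ∃ g : C.X (n + 1 + 1) →ₗ[R] Q, g.comp (C.d (n + 1)) = f

end ModuleComplex

/-- A complete flat resolution: an exact complex of flat modules that remains exact
after tensoring with any injective module. -/
def IsCompleteFlatResolution (C : ModuleComplex R) : Prop :=
  (∀ n, Module.Flat R (C.X n)) ∧ C.Exact ∧
    ∀ (I : Type u) [AddCommGroup I] [Module R I], Module.Injective R I → C.TensorExact I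

/-- A complete projective resolution: an exact complex of projective modules such that
`Hom_R(-, Q)` leaves it exact for every projective module `Q`. -/
def IsCompleteProjectiveResolution (C : ModuleComplex R) : Prop :=
  (∀ n, Module.Projective R (C.X n)) ∧ C.Exact ∧
    ∀ (Q : Type u) [AddCommGroup Q] [Module R Q], Module.Projective R Q → C.HomExact Q

/-- A Gorenstein flat module: a cokernel of a middle map of a complete flat resolution. -/
def IsGorensteinFlat (M : Type u) [AddCommGroup M] [Module R M] : Prop :=
  ∃ C : ModuleComplex R, IsCompleteFlatResolution R C ∧
    Nonempty (M ≃ₗ[R] LinearMap.range (C.d 0))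

/-- A Gorenstein projective module. -/
def IsGorensteinProjective (M : Type u) [AddCommGroup M] [Module R M] : Prop :=
  ∃ C : ModuleComplex R, IsCompleteProjectiveResolution R C ∧
    Nonempty (M ≃ₗ[R] LinearMap.range (C.d 0))

/-- `ResDimLE P n M` : `M` admits a length-`n` left resolution by modules satisfying `P`. -/
def ResDimLE (P : ∀ (N : Type u) [AddCommGroup N] [Module R N], Prop) :
    ℕ → ∀ (M : Type u) [AddCommGroup M] [Module R M], Prop :=
  Nat.rec (motive := fun _ => ∀ (M : Type u) [AddCommGroup M] [Module R M], Prop)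
    (fun M _ _ => P M)
    (fun _ ih M _ _ => ∃ (G : Type u) (_ : AddCommGroup G) (_ : Module R G)
      (f : G →ₗ[R] M), P G ∧ Function.Surjective f ∧ ih (LinearMap.ker f))

/-- `CoresDimLE P n M` : `M` admits a length-`n` right resolution by modules satisfying `P`. -/
def CoresDimLE (P : ∀ (N : Type u) [AddCommGroup N] [Module R N], Prop) :
    ℕ → ∀ (M : Type u) [AddCommGroup M] [Module R M], Prop :=
  Nat.rec (motive := fun _ => ∀ (M : Type u) [AddCommGroup M] [Module R M], Prop)
    (fun M _ _ => P M)
    (fun _ ih M _ _ => ∃ (I : Type u) (_ : AddCommGroup I) (_ : Module R I)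
      (f : M →ₗ[R] I), P I ∧ Function.Injective f ∧ ih (I ⧸ LinearMap.range f))

/-- Flat dimension. -/
noncomputable def flatDim (M : Type u) [AddCommGroup M] [Module R M] : ℕ∞ :=
  sInf {n : ℕ∞ | ∃ m : ℕ, n = m ∧ ResDimLE R (fun N _ _ => Module.Flat R N) m M}

/-- Injective dimension. -/
noncomputable def injDim (M : Type u) [AddCommGroup M] [Module R M] : ℕ∞ :=
  sInf {n : ℕ∞ | ∃ m : ℕ, n = m ∧ CoresDimLE R (fun N _ _ => Module.Injective R N) m M}

/-- Gorenstein flat dimension. -/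
noncomputable def gorensteinFlatDim (M : Type u) [AddCommGroup M] [Module R M] : ℕ∞ :=
  sInf {n : ℕ∞ | ∃ m : ℕ, n = m ∧ ResDimLE R (fun N _ _ => IsGorensteinFlat R N) m M}

/-- Gorenstein projective dimension. -/
noncomputable def gorensteinProjDim (M : Type u) [AddCommGroup M] [Module R M] : ℕ∞ :=
  sInf {n : ℕ∞ | ∃ m : ℕ, n = m ∧ ResDimLE R (fun N _ _ => IsGorensteinProjective R N) m M}

/-- `Tor_n^R(N, M)` as a module. -/
noncomputable def TorMod (n : ℕ) (N M : Type u) [AddCommGroup N] [Module R N]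
    [AddCommGroup M] [Module R M] : ModuleCat.{u} R :=
  ((Tor (ModuleCat.{u} R) n).obj (ModuleCat.of R N)).obj (ModuleCat.of R M)

/-- The copure flat dimension: the largest `n` with `Tor_n(E, M) ≠ 0`
for some injective module `E`. -/
noncomputable def copureFlatDim (M : Type u) [AddCommGroup M] [Module R M] : ℕ∞ :=
  sSup {n : ℕ∞ | ∃ m : ℕ, n = m ∧ ∃ (E : Type u) (_ : AddCommGroup E) (_ : Module R E),
    Module.Injective R E ∧ Nontrivial (TorMod R m E M)}

/-- `Ext^n_R(M, N)` as a module. -/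
noncomputable def ExtMod (n : ℕ) (M N : Type u) [AddCommGroup M] [Module R M]
    [AddCommGroup N] [Module R N] : ModuleCat.{u} R :=
  ((Ext R (ModuleCat.{u} R) n).obj (Opposite.op (ModuleCat.of R M))).obj (ModuleCat.of R N)

/-- `M` is infinitely presented: it admits a resolution by finitely generated
free modules. -/
def InfinitelyPresented (M : Type u) [AddCommGroup M] [Module R M] : Prop :=
  ∃ (F : ℕ → ModuleCat.{u} R) (d : ∀ n, F (n + 1) →ₗ[R] F n) (ε : (F 0 : Type u) →ₗ[R] M),
    (∀ n, Module.Free R (F n) ∧ Module.Finite R (F n)) ∧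
    Function.Surjective ε ∧ LinearMap.ker ε = LinearMap.range (d 0) ∧
    ∀ n, LinearMap.ker (d n) = LinearMap.range (d (n + 1))

-- auxiliary lemmas to insert above stmt6

/-- Key lemma: an exact complex of flat modules stays exact after tensoring with a
module of finite flat dimension. -/
theorem tensorExact_of_resDimLE_flat {R : Type u} [CommRing R] (C : ModuleComplex R)
    (hflat : ∀ n, Module.Flat R (C.X n)) (hex : C.Exact) :
    ∀ (m : ℕ) (I : Type u) [AddCommGroup I] [Module R I],
      ResDimLE R (fun N _ _ => Module.Flat R N) m I → C.TensorExact I := by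
  intro m
  induction m with
  | zero =>
    intro I _ _ hI n
    have : Module.Flat R I := hI
    have h1 : Function.Exact (C.d n) (C.d (n + 1)) :=
      LinearMap.exact_iff.mpr (hex n).symm
    have h2 : Function.Exact ((C.d n).lTensor I) ((C.d (n + 1)).lTensor I) :=
      Module.Flat.lTensor_exact I h1
    exact (LinearMap.exact_iff.mp h2).symm
  | succ m ih =>
    intro I _ _ hI
    obtain ⟨F, _, _, f, hF, hfsurj, hker⟩ := hI
    have hTF : C.TensorExact F := by
      refine (by
        intro n
        have h1 : Function.Exact (C.d n) (C.d (n + 1)) :=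
          LinearMap.exact_iff.mpr (hex n).symm
        exact (LinearMap.exact_iff.mp (Module.Flat.lTensor_exact F h1)).symm)
    have hTK : C.TensorExact (LinearMap.ker f) := ih _ hker
    -- notation
    intro n
    apply le_antisymm
    · -- range ⊆ ker : from d ∘ d = 0
      rintro x ⟨u, rfl⟩
      have : ((C.d (n+1)).lTensor I).comp ((C.d n).lTensor I) = 0 := by
        rw [← LinearMap.lTensor_comp, C.comp_eq_zero n, LinearMap.lTensor_zero]
      exact LinearMap.congr_fun this u
    · intro x hx
      have hx0 : (C.d (n+1)).lTensor I x = 0 := hx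
      -- lift along the surjection F ⊗ X → I ⊗ X
      obtain ⟨y, hy⟩ := LinearMap.rTensor_surjective (C.X (n+1)) hfsurj x
      -- commuting squares
      have comm : ∀ k : ℤ, ((C.d k).lTensor I).comp (f.rTensor (C.X k))
          = (f.rTensor (C.X (k+1))).comp ((C.d k).lTensor F) := by
        intro k
        rw [LinearMap.lTensor_comp_rTensor, LinearMap.rTensor_comp_lTensor]
      have commj : ∀ k : ℤ, ((C.d k).lTensor F).comp
            ((LinearMap.ker f).subtype.rTensor (C.X k))
          = ((LinearMap.ker f).subtype.rTensor (C.X (k+1))).comp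
              ((C.d k).lTensor (LinearMap.ker f)) := by
        intro k
        rw [LinearMap.lTensor_comp_rTensor, LinearMap.rTensor_comp_lTensor]
      -- exactness of tensored SES at middle, in each degree
      have hmid : ∀ k : ℤ, Function.Exact
          ((LinearMap.ker f).subtype.rTensor (C.X k)) (f.rTensor (C.X k)) := by
        intro k
        have := hflat k
        exact Module.Flat.rTensor_exact (C.X k) (LinearMap.exact_subtype_ker_map f)
      -- j injective in each degree
      have hjinj : ∀ k : ℤ, Function.Injective
          ((LinearMap.ker f).subtype.rTensor (C.X k)) := by
        intro k
        have := hflat k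
        exact Module.Flat.rTensor_preserves_injective_linearMap _ (Submodule.injective_subtype _)
      -- step 1: (d(n+1) ⊗ F) y maps to 0 in I ⊗ X(n+2)
      have h1 : f.rTensor (C.X (n+1+1)) ((C.d (n+1)).lTensor F y) = 0 := by
        have := LinearMap.congr_fun (comm (n+1)) y
        simp only [LinearMap.comp_apply] at this
        rw [← this, hy, hx0]
      obtain ⟨z, hz⟩ := (hmid (n+1+1) _).mp h1
      -- step 2: z is a cycle in K ⊗ X(n+2)
      have h2 : (C.d (n+1+1)).lTensor (LinearMap.ker f) z = 0 := by
        apply hjinj (n+1+1+1)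
        have hcj := LinearMap.congr_fun (commj (n+1+1)) z
        simp only [LinearMap.comp_apply] at hcj
        rw [map_zero, ← hcj, hz]
        have hdd : ((C.d (n+1+1)).lTensor F).comp ((C.d (n+1)).lTensor F) = 0 := by
          rw [← LinearMap.lTensor_comp, C.comp_eq_zero (n+1), LinearMap.lTensor_zero]
        exact LinearMap.congr_fun hdd y
      have h3 : z ∈ LinearMap.ker ((C.d (n+1+1)).lTensor (LinearMap.ker f)) := h2
      rw [← hTK (n+1)] at h3
      obtain ⟨w, hw⟩ := h3
      -- step 3: y - j w is a cycle in F ⊗ X(n+1)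
      have h4 : (C.d (n+1)).lTensor F
          (y - (LinearMap.ker f).subtype.rTensor (C.X (n+1)) w) = 0 := by
        have hcj := LinearMap.congr_fun (commj (n+1)) w
        simp only [LinearMap.comp_apply] at hcj
        rw [map_sub, hcj, hw, hz, sub_self]
      have h5 : (y - (LinearMap.ker f).subtype.rTensor (C.X (n+1)) w)
          ∈ LinearMap.ker ((C.d (n+1)).lTensor F) := h4
      rw [← hTF n] at h5
      obtain ⟨u, hu⟩ := h5
      -- step 4: push down to I
      refine ⟨f.rTensor (C.X n) u, ?_⟩
      have hcomm := LinearMap.congr_fun (comm n) u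
      simp only [LinearMap.comp_apply] at hcomm
      rw [hcomm, hu, map_sub, hy]
      have hfj : (f.rTensor (C.X (n+1))).comp
          ((LinearMap.ker f).subtype.rTensor (C.X (n+1))) = 0 := by
        rw [← LinearMap.rTensor_comp]
        have : f.comp (LinearMap.ker f).subtype = 0 := by
          ext ⟨k, hk⟩; exact hk
        rw [this, LinearMap.rTensor_zero]
      have h0 : f.rTensor (C.X (n+1)) ((LinearMap.ker f).subtype.rTensor (C.X (n+1)) w) = 0 := by
        have := LinearMap.congr_fun hfj w
        simpa using this
      rw [h0, sub_zero]

theorem gorensteinFlat_of_gorensteinProjective {R : Type u} [CommRing R]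
    (h : ∀ (I : Type u) [AddCommGroup I] [Module R I], Module.Injective R I → flatDim R I ≠ ⊤)
    (M : Type u) [AddCommGroup M] [Module R M]
    (hM : IsGorensteinProjective R M) : IsGorensteinFlat R M := by
  obtain ⟨C, ⟨hproj, hex, _⟩, iso⟩ := hM
  have hflat : ∀ n, Module.Flat R (C.X n) := by
    intro n
    exact @Module.Flat.of_projective R (C.X n) _ _ _ (hproj n)
  refine ⟨C, ⟨hflat, hex, ?_⟩, iso⟩
  intro I _ _ hI
  have hne := h I hI
  have : ∃ m : ℕ, ResDimLE R (fun N _ _ => Module.Flat R N) m I := by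
    by_contra hc
    push_neg at hc
    have : {n : ℕ∞ | ∃ m : ℕ, n = m ∧ ResDimLE R (fun N _ _ => Module.Flat R N) m I} = ∅ := by
      ext n
      simp only [Set.mem_setOf_eq, Set.mem_empty_iff_false, iff_false]
      rintro ⟨m, _, hm⟩
      exact hc m hm
    exact hne (by rw [flatDim, this, sInf_empty])
  obtain ⟨m, hm⟩ := this
  exact tensorExact_of_resDimLE_flat C hflat hex m I hm

theorem resDimLE_mono {R : Type u} [CommRing R]
    {P Q : ∀ (N : Type u) [AddCommGroup N] [Module R N], Prop}
    (hPQ : ∀ (N : Type u) [AddCommGroup N] [Module R N], P N → Q N) :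
    ∀ (m : ℕ) (M : Type u) [AddCommGroup M] [Module R M],
      ResDimLE R P m M → ResDimLE R Q m M := by
  intro m
  induction m with
  | zero => intro M _ _ hM; exact hPQ M hM
  | succ m ih =>
    rintro M _ _ ⟨G, _, _, f, hG, hf, hrest⟩
    exact ⟨G, _, _, f, hPQ G hG, hf, ih _ hrest⟩

/-- If every injective module has finite flat dimension, then every Gorenstein projective
module is Gorenstein flat, and `Gfd_R M ≤ Gpd_R M` for every module `M`. -/
theorem stmt6 (R : Type u) [CommRing R]
    (h : ∀ (I : Type u) [AddCommGroup I] [Module R I], Module.Injective R I → flatDim R I ≠ ⊤) :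
    (∀ (M : Type u) [AddCommGroup M] [Module R M],
        IsGorensteinProjective R M → IsGorensteinFlat R M) ∧
    (∀ (M : Type u) [AddCommGroup M] [Module R M],
        gorensteinFlatDim R M ≤ gorensteinProjDim R M) := by
  constructor
  · exact fun M _ _ => gorensteinFlat_of_gorensteinProjective h M
  · intro M _ _
    apply sInf_le_sInf
    rintro n ⟨m, rfl, hm⟩
    exact ⟨m, rfl, resDimLE_mono
      (fun N _ _ hN => gorensteinFlat_of_gorensteinProjective h N hN) m M hm⟩
end

section
/- Let L be an exact sequence of finitely generated free left R-modules. Then L is a complete resolution by finitely generated free modules (i.e., Hom_R(L, R) is exact) if and only if L is a complete projective resolution (i.e., Hom_R(L, Q) is exact for every projective left R-module Q). -/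
open CategoryTheory

universe u

variable (R : Type u) [CommRing R]

private lemma homExact_pi {R : Type u} [CommRing R] (C : ModuleComplex R) (ι : Type u)
    (h : C.HomExact R) : C.HomExact (ι → R) := by
  intro n f hf
  have hcomp : ∀ i : ι, ((LinearMap.proj i : (ι → R) →ₗ[R] R).comp f).comp (C.d n) = 0 := by
    intro i
    ext x
    have : f (C.d n x) = 0 := by
      have := congrArg (fun g => g x) hf
      simpa using this
    simp [this]
  choose g hg using fun i : ι =>
    h n ((LinearMap.proj i : (ι → R) →ₗ[R] R).comp f) (hcomp i)
  refine ⟨LinearMap.pi g, ?_⟩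
  ext x i
  have := congrArg (fun g => g x) (hg i)
  simpa using this

/-- For an exact complex `L` of finitely generated free modules, `Hom(L, R)` is exact iff
`Hom(L, Q)` is exact for every projective module `Q`. -/
theorem stmt9 (R : Type u) [CommRing R] (L : ModuleComplex R)
    (hfree : ∀ n, Module.Free R (L.X n) ∧ Module.Finite R (L.X n)) (hexact : L.Exact) :
    L.HomExact R ↔
      ∀ (Q : Type u) [AddCommGroup Q] [Module R Q], Module.Projective R Q →
        L.HomExact Q := by
  constructor
  · intro h Q _ _ hQ n f hf
    classical
    obtain ⟨s, hs⟩ := (Module.projective_def.mp hQ)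
    set π : (Q →₀ R) →ₗ[R] Q := Finsupp.linearCombination R id with hπ
    set F : L.X (n + 1) →ₗ[R] (Q →₀ R) := s.comp f with hF
    -- finite generation of L.X (n+1)
    have : Module.Finite R (L.X (n + 1)) := (hfree (n + 1)).2
    obtain ⟨t, ht⟩ := Module.Finite.fg_top (R := R) (M := L.X (n + 1))
    set S : Finset Q := t.biUnion (fun x => (F x).support) with hS
    have hsupp : ∀ x : L.X (n + 1), (F x).support ⊆ S := by
      intro x
      have hx : x ∈ Submodule.comap F (Finsupp.supported R R (S : Set Q)) := by
        have hle : Submodule.span R (t : Set (L.X (n + 1))) ≤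
            Submodule.comap F (Finsupp.supported R R (S : Set Q)) := by
          rw [Submodule.span_le]
          intro y hy
          simp only [SetLike.mem_coe, Submodule.mem_comap, Finsupp.mem_supported]
          intro q hq
          exact Finset.mem_coe.mpr (Finset.mem_biUnion.mpr
            ⟨y, by simpa using hy, by simpa using hq⟩)
        rw [ht] at hle
        exact hle Submodule.mem_top
      simpa [Finsupp.mem_supported] using hx
    -- the pointwise version of F
    set Fc : L.X (n + 1) →ₗ[R] (Q → R) :=
      LinearMap.pi (fun q : Q => (Finsupp.lapply q).comp F) with hFc
    have hFc0 : Fc.comp (L.d n) = 0 := by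
      ext x q
      have : f (L.d n x) = 0 := by
        have := congrArg (fun g => g x) hf
        simpa using this
      simp [hFc, hF, this]
    obtain ⟨G, hG⟩ := homExact_pi L Q h n Fc hFc0
    set G' : L.X (n + 1 + 1) →ₗ[R] (Q →₀ R) :=
      ∑ q ∈ S, (Finsupp.lsingle q).comp ((LinearMap.proj q).comp G) with hG'
    refine ⟨π.comp G', ?_⟩
    ext x
    have hGd : G (L.d (n + 1) x) = Fc x := by
      have := congrArg (fun g => g x) hG
      simpa using this
    have key : G' (L.d (n + 1) x) = F x := by
      have h1 : G' (L.d (n + 1) x) = ∑ q ∈ S, Finsupp.single q ((F x) q) := by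
        simp [hG', LinearMap.sum_apply, hGd, hFc]
      rw [h1]
      have h2 : ∑ q ∈ S, Finsupp.single q ((F x) q)
          = ∑ q ∈ (F x).support, Finsupp.single q ((F x) q) := by
        refine (Finset.sum_subset (hsupp x) ?_).symm
        intro q _ hq
        simp [Finsupp.notMem_support_iff.mp hq]
      rw [h2]
      exact Finsupp.sum_single (F x)
    have : π (F x) = f x := by
      simpa [hF, hπ] using hs (f x)
    simp only [LinearMap.comp_apply, key, this]
  · intro h
    exact h R inferInstance
end

section
/- Let L be an exact sequence of finitely generated free left R-modules. Then Hom_R(L, R) is exact if and only if I ⊗_R L is exact for every injective right R-module I (i.e., L is a complete flat resolution). -/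
open CategoryTheory

universe u

variable (R : Type u) [CommRing R]

section Stmt10Aux

open TensorProduct LinearMap

variable {R : Type u} [CommRing R]

private lemma exact_transfer {A B C A' B' C' : Type u}
    [AddCommGroup A] [Module R A] [AddCommGroup B] [Module R B] [AddCommGroup C] [Module R C]
    [AddCommGroup A'] [Module R A'] [AddCommGroup B'] [Module R B'] [AddCommGroup C'] [Module R C']
    (f : A →ₗ[R] B) (g : B →ₗ[R] C) (f' : A' →ₗ[R] B') (g' : B' →ₗ[R] C')
    (eA : A ≃ₗ[R] A') (eB : B ≃ₗ[R] B') (eC : C ≃ₗ[R] C')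
    (hf : ∀ a, eB (f a) = f' (eA a)) (hg : ∀ b, eC (g b) = g' (eB b))
    (h : LinearMap.range f = LinearMap.ker g) :
    LinearMap.range f' = LinearMap.ker g' := by
  ext b'
  simp only [LinearMap.mem_range, LinearMap.mem_ker]
  constructor
  · rintro ⟨a', rfl⟩
    have h1 : f' a' = eB (f (eA.symm a')) := by rw [hf, eA.apply_symm_apply]
    have h2 : f (eA.symm a') ∈ LinearMap.ker g := h ▸ LinearMap.mem_range_self f _
    rw [LinearMap.mem_ker] at h2
    rw [h1, ← hg, h2, map_zero]
  · intro h0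
    have h1 : g (eB.symm b') = 0 := by
      apply eC.injective
      rw [hg, eB.apply_symm_apply, h0, map_zero]
    have h2 : eB.symm b' ∈ LinearMap.range f := by
      rw [h, LinearMap.mem_ker]; exact h1
    obtain ⟨a, ha⟩ := h2
    exact ⟨eA a, by rw [← hf, ha, eB.apply_symm_apply]⟩

private lemma hom_exact_of_exact {A B C I : Type u}
    [AddCommGroup A] [Module R A] [AddCommGroup B] [Module R B] [AddCommGroup C] [Module R C]
    [AddCommGroup I] [Module R I]
    (hI : Module.Injective R I) (f : A →ₗ[R] B) (g : B →ₗ[R] C)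
    (h : LinearMap.range f = LinearMap.ker g) :
    LinearMap.range (LinearMap.lcomp R I g) = LinearMap.ker (LinearMap.lcomp R I f) := by
  apply le_antisymm
  · rintro _ ⟨ψ, rfl⟩
    rw [LinearMap.mem_ker]
    ext a
    have h2 : f a ∈ LinearMap.ker g := h ▸ LinearMap.mem_range_self f a
    rw [LinearMap.mem_ker] at h2
    simp [h2]
  · intro φ hφ
    rw [LinearMap.mem_ker] at hφ
    have hφa : ∀ a, φ (f a) = 0 := fun a => by
      simpa using LinearMap.congr_fun hφ a
    have hle : LinearMap.ker g ≤ LinearMap.ker φ := by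
      intro b hb
      rw [← h] at hb
      obtain ⟨a, rfl⟩ := hb
      exact hφa a
    let φ' : (B ⧸ LinearMap.ker g) →ₗ[R] I := Submodule.liftQ (LinearMap.ker g) φ hle
    let e := g.quotKerEquivRange
    let φ'' : LinearMap.range g →ₗ[R] I := φ'.comp (e.symm : LinearMap.range g →ₗ[R] _)
    obtain ⟨ψ, hψ⟩ := hI.out (LinearMap.range g).subtype (Submodule.injective_subtype _) φ''
    refine ⟨ψ, ?_⟩
    ext b
    have h1 : ψ (g b) = φ'' ⟨g b, LinearMap.mem_range_self g b⟩ :=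
      hψ ⟨g b, LinearMap.mem_range_self g b⟩
    have h2 : e.symm ⟨g b, LinearMap.mem_range_self g b⟩ = Submodule.Quotient.mk b := by
      rw [LinearEquiv.symm_apply_eq]
      exact Subtype.ext (g.quotKerEquivRange_apply_mk b).symm
    simp only [LinearMap.lcomp_apply, h1]
    show φ' (e.symm ⟨g b, LinearMap.mem_range_self g b⟩) = φ b
    rw [h2]
    exact Submodule.liftQ_apply _ _ _

private noncomputable def tensEquivHomDual (I X : Type u) [AddCommGroup I] [Module R I]
    [AddCommGroup X] [Module R X] [Module.Free R X] [Module.Finite R X] :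
    (I ⊗[R] X) ≃ₗ[R] (Module.Dual R X →ₗ[R] I) :=
  (TensorProduct.comm R I X) ≪≫ₗ
    (TensorProduct.congr (Module.evalEquiv R X) (LinearEquiv.refl R I)) ≪≫ₗ
      dualTensorHomEquiv R (Module.Dual R X) I

private lemma tensEquivHomDual_apply {I X : Type u} [AddCommGroup I] [Module R I]
    [AddCommGroup X] [Module R X] [Module.Free R X] [Module.Finite R X]
    (i : I) (x : X) (f : Module.Dual R X) :
    tensEquivHomDual I X (i ⊗ₜ[R] x) f = f x • i := by
  simp [tensEquivHomDual, dualTensorHomEquivOfBasis_apply]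

private lemma tensEquivHomDual_natural {I X Y : Type u} [AddCommGroup I] [Module R I]
    [AddCommGroup X] [Module R X] [Module.Free R X] [Module.Finite R X]
    [AddCommGroup Y] [Module R Y] [Module.Free R Y] [Module.Finite R Y]
    (d : X →ₗ[R] Y) (t : I ⊗[R] X) :
    tensEquivHomDual I Y (LinearMap.lTensor I d t) =
      LinearMap.lcomp R I d.dualMap (tensEquivHomDual I X t) := by
  induction t with
  | zero => simp
  | tmul i x =>
      ext f
      simp [tensEquivHomDual_apply]
  | add a b ha hb => simp [ha, hb]

private lemma dual_exact_of_homExact (L : ModuleComplex R) (hh : L.HomExact R) (n : ℤ) :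
    LinearMap.range ((L.d (n + 1)).dualMap) = LinearMap.ker ((L.d n).dualMap) := by
  ext f
  simp only [LinearMap.mem_range, LinearMap.mem_ker]
  constructor
  · rintro ⟨g, rfl⟩
    rw [LinearMap.dualMap_apply', LinearMap.dualMap_apply', LinearMap.comp_assoc,
      L.comp_eq_zero n, LinearMap.comp_zero]
  · intro hf
    rw [LinearMap.dualMap_apply'] at hf
    obtain ⟨g, hg⟩ := hh n f hf
    exact ⟨g, by rw [LinearMap.dualMap_apply']; exact hg⟩

private noncomputable def toCharacter {A : Type u} [AddCommGroup A] [Module R A]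
    (c : CharacterModule A) : A →ₗ[R] CharacterModule R where
  toFun a :=
    { toFun := fun r => c (r • a)
      map_zero' := by show c ((0 : R) • a) = 0; rw [zero_smul, map_zero]
      map_add' := fun r s => by
        show c ((r + s) • a) = c (r • a) + c (s • a)
        rw [add_smul, map_add] }
  map_add' a b := by
    ext r
    show c (r • (a + b)) = c (r • a) + c (r • b)
    rw [smul_add, map_add]
  map_smul' s a := by
    ext r
    show c (r • s • a) = c ((s • r) • a)
    rw [smul_smul, smul_eq_mul, mul_comm]

end Stmt10Aux

/-- For an exact complex `L` of finitely generated free modules, `Hom(L, R)` is exact iff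
`I ⊗ L` is exact for every injective module `I`. -/
theorem stmt10 (R : Type u) [CommRing R] (L : ModuleComplex R)
    (hfree : ∀ n, Module.Free R (L.X n) ∧ Module.Finite R (L.X n)) (hexact : L.Exact) :
    L.HomExact R ↔
      ∀ (I : Type u) [AddCommGroup I] [Module R I], Module.Injective R I →
        L.TensorExact I := by
  constructor
  · intro hh I _ _ hI n
    haveI := (hfree n).1; haveI := (hfree n).2
    haveI := (hfree (n + 1)).1; haveI := (hfree (n + 1)).2
    haveI := (hfree (n + 1 + 1)).1; haveI := (hfree (n + 1 + 1)).2
    refine exact_transfer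
      (LinearMap.lcomp R I (L.d n).dualMap) (LinearMap.lcomp R I (L.d (n + 1)).dualMap)
      (LinearMap.lTensor I (L.d n)) (LinearMap.lTensor I (L.d (n + 1)))
      (tensEquivHomDual I (L.X n)).symm (tensEquivHomDual I (L.X (n + 1))).symm
      (tensEquivHomDual I (L.X (n + 1 + 1))).symm ?_ ?_
      (hom_exact_of_exact hI _ _ (dual_exact_of_homExact L hh n))
    · intro a
      have := tensEquivHomDual_natural (L.d n) ((tensEquivHomDual I (L.X n)).symm a)
      rw [LinearEquiv.apply_symm_apply] at this
      rw [← this, LinearEquiv.symm_apply_apply]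
    · intro b
      have := tensEquivHomDual_natural (L.d (n + 1)) ((tensEquivHomDual I (L.X (n + 1))).symm b)
      rw [LinearEquiv.apply_symm_apply] at this
      rw [← this, LinearEquiv.symm_apply_apply]
  · intro h n f hf
    haveI := (hfree n).1; haveI := (hfree n).2
    haveI := (hfree (n + 1)).1; haveI := (hfree (n + 1)).2
    haveI := (hfree (n + 1 + 1)).1; haveI := (hfree (n + 1 + 1)).2
    have hEinj : Module.Injective R (CharacterModule R) :=
      (Module.Flat.iff_characterModule_injective (R := R) (M := R)).mp inferInstance
    have hT := h (CharacterModule R) hEinj n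
    have homexact : LinearMap.range (LinearMap.lcomp R (CharacterModule R) (L.d n).dualMap)
        = LinearMap.ker (LinearMap.lcomp R (CharacterModule R) (L.d (n + 1)).dualMap) := by
      refine exact_transfer
        (LinearMap.lTensor (CharacterModule R) (L.d n))
        (LinearMap.lTensor (CharacterModule R) (L.d (n + 1)))
        (LinearMap.lcomp R (CharacterModule R) (L.d n).dualMap)
        (LinearMap.lcomp R (CharacterModule R) (L.d (n + 1)).dualMap)
        (tensEquivHomDual (CharacterModule R) (L.X n))
        (tensEquivHomDual (CharacterModule R) (L.X (n + 1)))
        (tensEquivHomDual (CharacterModule R) (L.X (n + 1 + 1))) ?_ ?_ hT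
      · intro a; exact tensEquivHomDual_natural (L.d n) a
      · intro b; exact tensEquivHomDual_natural (L.d (n + 1)) b
    by_contra hno
    push_neg at hno
    set S : Submodule R (Module.Dual R (L.X (n + 1))) :=
      LinearMap.range ((L.d (n + 1)).dualMap) with hS
    have hfS : (f : Module.Dual R (L.X (n + 1))) ∉ S := by
      intro hmem
      obtain ⟨g, hg⟩ := hmem
      rw [LinearMap.dualMap_apply'] at hg
      exact hno g hg
    have hne : (Submodule.Quotient.mk f : Module.Dual R (L.X (n + 1)) ⧸ S) ≠ 0 := by
      intro h0
      exact hfS ((Submodule.Quotient.mk_eq_zero S).mp h0)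
    obtain ⟨c, hc⟩ := CharacterModule.exists_character_apply_ne_zero_of_ne_zero hne
    set ψ : Module.Dual R (L.X (n + 1)) →ₗ[R] CharacterModule R :=
      (toCharacter c).comp S.mkQ with hψdef
    have hψker : (LinearMap.lcomp R (CharacterModule R) (L.d (n + 1)).dualMap) ψ = 0 := by
      ext g
      have hm : (L.d (n + 1)).dualMap g ∈ S := LinearMap.mem_range_self _ _
      have : S.mkQ ((L.d (n + 1)).dualMap g) = 0 := (Submodule.Quotient.mk_eq_zero S).mpr hm
      simp only [LinearMap.lcomp_apply, hψdef, LinearMap.comp_apply, this, map_zero]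
      rfl
    have hψmem : ψ ∈ LinearMap.range (LinearMap.lcomp R (CharacterModule R) (L.d n).dualMap) := by
      rw [homexact, LinearMap.mem_ker]; exact hψker
    obtain ⟨χ, hχ⟩ := hψmem
    have hψf : ψ f = 0 := by
      rw [← hχ]
      have : (L.d n).dualMap f = 0 := by rw [LinearMap.dualMap_apply']; exact hf
      simp only [LinearMap.lcomp_apply, this, map_zero]
    have : (ψ f) 1 = c (Submodule.Quotient.mk f) := by
      show (toCharacter c (S.mkQ f)) 1 = _
      show c ((1 : R) • (S.mkQ f)) = _
      rw [one_smul]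
      rfl
    rw [hψf] at this
    exact hc this.symm
end

section
/- Let N be an infinitely presented left R-module with Ext^n_R(N, R) = 0 for all n > 0. Then Ext^1_R(N, F) = 0 for every flat left R-module F. -/
open CategoryTheory

universe u

variable (R : Type u) [CommRing R]

section
variable {R : Type u} [CommRing R] {N : Type u} [AddCommGroup N] [Module R N]
variable (F : ℕ → ModuleCat.{u} R) (d : ∀ n, (F (n + 1) : Type u) →ₗ[R] F n)
  (ε : (F 0 : Type u) →ₗ[R] N)

noncomputable def stmt12Cplx (hd : ∀ n, LinearMap.ker (d n) = LinearMap.range (d (n + 1))) :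
    ChainComplex (ModuleCat.{u} R) ℕ :=
  ChainComplex.of F (fun n => ModuleCat.ofHom (d n)) (fun n => by
    apply ModuleCat.hom_ext
    apply LinearMap.ext
    intro x
    have : d (n + 1) x ∈ LinearMap.ker (d n) := by
      rw [hd n]; exact ⟨x, rfl⟩
    exact this)

variable (hfree : ∀ n, Module.Free R (F n) ∧ Module.Finite R (F n))
  (hsurj : Function.Surjective ε) (h0 : LinearMap.ker ε = LinearMap.range (d 0))
  (hd : ∀ n, LinearMap.ker (d n) = LinearMap.range (d (n + 1)))

noncomputable def stmt12Resol : ProjectiveResolution (ModuleCat.of R N) where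
  complex := stmt12Cplx F d hd
  projective := fun n => by
    have := (hfree n).1
    exact ModuleCat.projective_of_free (Module.Free.chooseBasis R (F n))
  π := (ChainComplex.toSingle₀Equiv _ _).symm ⟨ModuleCat.ofHom ε, by
    apply ModuleCat.hom_ext
    apply LinearMap.ext
    intro x
    show ε (((stmt12Cplx F d hd).d 1 0).hom x) = 0
    have h10 : (stmt12Cplx F d hd).d 1 0 = ModuleCat.ofHom (d 0) := ChainComplex.of_d F (fun n => ModuleCat.ofHom (d n)) 0
    rw [h10]
    have : d 0 x ∈ LinearMap.ker ε := by rw [h0]; exact ⟨x, rfl⟩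
    exact this⟩
  quasiIso := ⟨fun n => by
    cases n with
    | zero =>
      rw [ChainComplex.quasiIsoAt₀_iff, ShortComplex.quasiIso_iff_of_zeros']
      · have hc : ModuleCat.ofHom (d 0) ≫ ModuleCat.ofHom ε = 0 := by
          apply ModuleCat.hom_ext
          apply LinearMap.ext
          intro x
          have : d 0 x ∈ LinearMap.ker ε := by rw [h0]; exact ⟨x, rfl⟩
          exact this
        have h10 : (stmt12Cplx F d hd).d 1 0 = ModuleCat.ofHom (d 0) := ChainComplex.of_d F (fun n => ModuleCat.ofHom (d n)) 0
        refine (ShortComplex.exact_and_epi_g_iff_of_iso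
            (ShortComplex.isoMk (Iso.refl _) (Iso.refl _) (Iso.refl _) ?_ ?_ :
              _ ≅ ShortComplex.mk (ModuleCat.ofHom (d 0)) (ModuleCat.ofHom ε) hc)).2 ⟨?_, ?_⟩
        · simpa using h10
        · simp [ChainComplex.toSingle₀Equiv]
        · rw [ShortComplex.moduleCat_exact_iff_range_eq_ker]
          exact h0.symm
        · exact (ModuleCat.epi_iff_surjective _).2 hsurj
      all_goals rfl
    | succ n =>
      rw [quasiIsoAt_iff_exactAt']
      · rw [HomologicalComplex.exactAt_iff' _ (n + 1 + 1) (n + 1) n (by simp) (by simp)]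
        rw [ShortComplex.moduleCat_exact_iff_range_eq_ker]
        show LinearMap.range ((stmt12Cplx F d hd).d (n+2) (n+1)).hom = LinearMap.ker ((stmt12Cplx F d hd).d (n+1) n).hom
        have e1 : (stmt12Cplx F d hd).d (n+2) (n+1) = ModuleCat.ofHom (d (n+1)) := ChainComplex.of_d F (fun n => ModuleCat.ofHom (d n)) (n+1)
        have e2 : (stmt12Cplx F d hd).d (n+1) n = ModuleCat.ofHom (d n) := ChainComplex.of_d F (fun n => ModuleCat.ofHom (d n)) n
        rw [e1, e2]
        exact (hd n).symm
      · apply ChainComplex.exactAt_succ_single_obj⟩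
end

section
variable {R : Type u} [CommRing R] {N : Type u} [AddCommGroup N] [Module R N]
variable (F : ℕ → ModuleCat.{u} R) (d : ∀ n, (F (n + 1) : Type u) →ₗ[R] F n)
  (ε : (F 0 : Type u) →ₗ[R] N)
  (hfree : ∀ n, Module.Free R (F n) ∧ Module.Finite R (F n))
  (hsurj : Function.Surjective ε) (h0 : LinearMap.ker ε = LinearMap.range (d 0))
  (hd : ∀ n, LinearMap.ker (d n) = LinearMap.range (d (n + 1)))

include ε hfree hsurj h0 hd in
lemma stmt12ExtOneChar (Y : Type u) [AddCommGroup Y] [Module R Y] :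
    Subsingleton (ExtMod R 1 N Y : Type u) ↔
      ∀ f : (F 1 : Type u) →ₗ[R] Y, f.comp (d 1) = 0 →
        ∃ g : (F 0 : Type u) →ₗ[R] Y, g.comp (d 0) = f := by
  set P := stmt12Resol F d ε hfree hsurj h0 hd
  set K := P.complex.linearYonedaObj R (ModuleCat.of R Y) with hK
  have iso := P.isoExt (R := R) 1 (ModuleCat.of R Y)
  have hzero : Subsingleton (ExtMod R 1 N Y : Type u) ↔ Limits.IsZero (K.homology 1) := by
    constructor
    · intro hs
      exact (ModuleCat.isZero_of_subsingleton (ExtMod R 1 N Y)).of_iso iso.symm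
    · intro hz
      have : Limits.IsZero (ExtMod R 1 N Y) := hz.of_iso iso
      rw [Limits.IsZero.iff_id_eq_zero] at this
      constructor
      intro a b
      calc a = 0 := congrArg (fun φ => φ.hom a) this
        _ = b := (congrArg (fun φ => φ.hom b) this).symm
  rw [hzero, ← HomologicalComplex.exactAt_iff_isZero_homology,
    HomologicalComplex.exactAt_iff' _ 0 1 2 (by simp) (by simp),
    ShortComplex.moduleCat_exact_iff]
  constructor
  · intro H f hf
    obtain ⟨g, hg⟩ := H (ModuleCat.ofHom f) (by
      apply ModuleCat.hom_ext; exact hf)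
    exact ⟨g.hom, congrArg ModuleCat.Hom.hom hg⟩
  · intro H f hf
    obtain ⟨g, hg⟩ := H f.hom (congrArg ModuleCat.Hom.hom hf)
    exact ⟨ModuleCat.ofHom g, ModuleCat.hom_ext hg⟩

end

/-- If `N` is infinitely presented and `Ext^n(N, R) = 0` for all `n > 0`, then
`Ext^1(N, F) = 0` for every flat module `F`. -/
theorem stmt12 (R : Type u) [CommRing R] (N : Type u) [AddCommGroup N] [Module R N]
    (hN : InfinitelyPresented R N)
    (h : ∀ n : ℕ, 0 < n → Subsingleton (ExtMod R n N R)) :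
    ∀ (F : Type u) [AddCommGroup F] [Module R F], Module.Flat R F →
      Subsingleton (ExtMod R 1 N F) := by
  classical
  intro M _ _ hflat
  obtain ⟨F, d, ε, hfree, hsurj, h0, hd⟩ := hN
  have hR : ∀ f : (F 1 : Type u) →ₗ[R] R, f ∘ₗ d 1 = 0 →
      ∃ g : (F 0 : Type u) →ₗ[R] R, g ∘ₗ d 0 = f :=
    (stmt12ExtOneChar F d ε hfree hsurj h0 hd R).mp (h 1 one_pos)
  refine (stmt12ExtOneChar F d ε hfree hsurj h0 hd M).mpr ?_
  intro f hf
  haveI := (hfree 1).1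
  haveI := (hfree 1).2
  haveI : Module.Projective R (F 1) := Module.Projective.of_free
  haveI : Module.FinitePresentation R (F 1) := Module.finitePresentation_of_projective R (F 1)
  have hfgker : (LinearMap.ker (d 0)).FG := by
    rw [hd 0]
    have hfin : Module.Finite R (F 2) := (hfree 2).2
    have h1 : ((⊤ : Submodule R (F 2)).map (d 1)).FG :=
      Submodule.FG.map _ hfin.fg_top
    rwa [Submodule.map_top] at h1
  haveI : Module.FinitePresentation R ((F 1 : Type u) ⧸ LinearMap.ker (d 0)) :=
    Module.finitePresentation_of_surjective (LinearMap.ker (d 0)).mkQ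
      (Submodule.mkQ_surjective _) (by rwa [Submodule.ker_mkQ])
  have hker_le : LinearMap.ker (d 0) ≤ LinearMap.ker f := by
    rw [hd 0]
    rintro x ⟨y, rfl⟩
    exact LinearMap.congr_fun hf y
  set φ := (LinearMap.ker (d 0)).liftQ f hker_le with hφ
  obtain ⟨κ, hκ, h₂, h₃, hfac⟩ : ∃ (κ : Type) (_ : Fintype κ) (h₂ : _ →ₗ[R] (κ →₀ R))
      (h₃ : (κ →₀ R) →ₗ[R] M), φ = h₃ ∘ₗ h₂ := by
    obtain ⟨k, h₂, h₃, hfac⟩ := Module.Flat.exists_factorization_of_finitePresentation (M := M) φ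
    exact ⟨Fin k, inferInstance, h₂, h₃, hfac⟩
  haveI := hκ
  have hmkQd1 : ∀ y : (F 2 : Type u), (LinearMap.ker (d 0)).mkQ (d 1 y) = 0 := fun y =>
    (Submodule.Quotient.mk_eq_zero _).2 (by rw [hd 0]; exact ⟨y, rfl⟩)
  have hcoord : ∀ a : κ, ((Finsupp.lapply a) ∘ₗ (h₂ ∘ₗ (LinearMap.ker (d 0)).mkQ)) ∘ₗ d 1 = 0 := by
    intro a
    apply LinearMap.ext
    intro y
    simp [hmkQd1 y]
  choose g hg using fun a : κ =>
    hR ((Finsupp.lapply a) ∘ₗ (h₂ ∘ₗ (LinearMap.ker (d 0)).mkQ)) (hcoord a)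
  set G : (F 0 : Type u) →ₗ[R] (κ →₀ R) :=
    (Finsupp.linearEquivFunOnFinite R R κ).symm.toLinearMap ∘ₗ LinearMap.pi g with hG
  refine ⟨h₃ ∘ₗ G, ?_⟩
  apply LinearMap.ext
  intro x
  show h₃ (G (d 0 x)) = f x
  have h1 : G (d 0 x) = h₂ ((LinearMap.ker (d 0)).mkQ x) := by
    rw [hG]
    have : (fun a : κ => g a (d 0 x)) = ⇑(h₂ ((LinearMap.ker (d 0)).mkQ x)) := by
      funext a
      exact LinearMap.congr_fun (hg a) x
    show (Finsupp.linearEquivFunOnFinite R R κ).symm (LinearMap.pi g (d 0 x)) = _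
    have hpi : LinearMap.pi g (d 0 x) = fun a : κ => g a (d 0 x) := rfl
    rw [hpi, this, Finsupp.linearEquivFunOnFinite_symm_coe]
  rw [h1, ← LinearMap.comp_apply, ← hfac]
  exact Submodule.liftQ_apply _ f x
end
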